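/- (Bounds on q₃ for low temperatures; Proposition prop:bounds-lowA.) Suppose A < −B²/(3C) and let (q₁, q₂, q₃) be a solution of (EL123)–(BC123) with q₃ < 0 everywhere in Ω. Then s₋/3 ≤ q₃(x,y) ≤ −s₊/6 for every (x,y) ∈ Ω. -/

import Mathlib

open MeasureTheory Set

noncomputable section

/-- `s₊ = (B + √(B² + 24|A|C))/(4C)`. -/
def splus (A B C : ℝ) : ℝ := (B + Real.sqrt (B ^ 2 + 24 * |A| * C)) / (4 * C)

/-- `s₋ = (B − √(B² + 24|A|C))/(4C)`. -/
def sminus (A B C : ℝ) : ℝ := (B - Real.sqrt (B ^ 2 + 24 * |A| * C)) / (4 * C)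

/-- The truncated square `Ω`. -/
def TSq (η : ℝ) : Set (ℝ × ℝ) :=
  {p | |p.1| < 1 - η ∧ |p.2| < 1 - η ∧ |p.1 + p.2| < 1 ∧ |p.1 - p.2| < 1}

/-- Long edge `C₁` on the line `x + y = 1`. -/
def edgeC1 (η : ℝ) : Set (ℝ × ℝ) := {p | p.1 + p.2 = 1 ∧ η ≤ p.1 ∧ p.1 ≤ 1 - η}
/-- Long edge `C₂` on the line `y − x = 1`. -/
def edgeC2 (η : ℝ) : Set (ℝ × ℝ) := {p | p.2 - p.1 = 1 ∧ -(1 - η) ≤ p.1 ∧ p.1 ≤ -η}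
/-- Long edge `C₃` on the line `x + y = −1`. -/
def edgeC3 (η : ℝ) : Set (ℝ × ℝ) := {p | p.1 + p.2 = -1 ∧ -(1 - η) ≤ p.1 ∧ p.1 ≤ -η}
/-- Long edge `C₄` on the line `x − y = 1`. -/
def edgeC4 (η : ℝ) : Set (ℝ × ℝ) := {p | p.1 - p.2 = 1 ∧ η ≤ p.1 ∧ p.1 ≤ 1 - η}
/-- Short edge `S₁`, `x = 1 − η`. -/
def edgeS1 (η : ℝ) : Set (ℝ × ℝ) := {p | p.1 = 1 - η ∧ |p.2| ≤ η}
/-- Short edge `S₂`, `y = 1 − η`. -/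
def edgeS2 (η : ℝ) : Set (ℝ × ℝ) := {p | p.2 = 1 - η ∧ |p.1| ≤ η}
/-- Short edge `S₃`, `x = −(1 − η)`. -/
def edgeS3 (η : ℝ) : Set (ℝ × ℝ) := {p | p.1 = -(1 - η) ∧ |p.2| ≤ η}
/-- Short edge `S₄`, `y = −(1 − η)`. -/
def edgeS4 (η : ℝ) : Set (ℝ × ℝ) := {p | p.2 = -(1 - η) ∧ |p.1| ≤ η}

/-- The interpolating boundary function `g₀(s) = s₊ s/(2η)`. -/
def g0 (A B C η s : ℝ) : ℝ := splus A B C * s / (2 * η)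

/-- The two-dimensional Laplacian: sum of the two second partial derivatives. -/
def lap2 (q : ℝ × ℝ → ℝ) (p : ℝ × ℝ) : ℝ :=
  deriv (deriv fun x => q (x, p.2)) p.1 + deriv (deriv fun y => q (p.1, y)) p.2

/-- `|∇q|²` in two dimensions. -/
def gradSq2 (q : ℝ × ℝ → ℝ) (p : ℝ × ℝ) : ℝ :=
  (deriv (fun x => q (x, p.2)) p.1) ^ 2 + (deriv (fun y => q (p.1, y)) p.2) ^ 2

/-- The Dirichlet boundary condition `q₁ = q₁b` on `∂Ω`. -/
def BC1 (A B C η : ℝ) (q1 : ℝ × ℝ → ℝ) : Prop :=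
  (∀ p ∈ edgeC1 η ∪ edgeC3 η, q1 p = -(splus A B C) / 2) ∧
  (∀ p ∈ edgeC2 η ∪ edgeC4 η, q1 p = splus A B C / 2) ∧
  (∀ p ∈ edgeS1 η ∪ edgeS3 η, q1 p = g0 A B C η p.2) ∧
  (∀ p ∈ edgeS2 η ∪ edgeS4 η, q1 p = g0 A B C η p.1)

/-- A solution of the system (EL123) with boundary conditions (BC123):
a triple of functions in `C²(Ω) ∩ C(Ω̄)` satisfying the three PDEs in `Ω`,
with `q₁ = q₁b`, `q₂ = 0`, `q₃ = −s₊/6` on `∂Ω`. -/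
def IsSolEL123 (A B C L lam η : ℝ) (q1 q2 q3 : ℝ × ℝ → ℝ) : Prop :=
  ContDiffOn ℝ 2 q1 (TSq η) ∧ ContDiffOn ℝ 2 q2 (TSq η) ∧ ContDiffOn ℝ 2 q3 (TSq η) ∧
  ContinuousOn q1 (closure (TSq η)) ∧ ContinuousOn q2 (closure (TSq η)) ∧
  ContinuousOn q3 (closure (TSq η)) ∧
  (∀ p ∈ TSq η, lap2 q1 p =
    lam ^ 2 / L * q1 p *
      (A + 2 * B * q3 p + 2 * C * ((q1 p) ^ 2 + (q2 p) ^ 2 + 3 * (q3 p) ^ 2))) ∧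
  (∀ p ∈ TSq η, lap2 q2 p =
    lam ^ 2 / L * q2 p *
      (A + 2 * B * q3 p + 2 * C * ((q1 p) ^ 2 + (q2 p) ^ 2 + 3 * (q3 p) ^ 2))) ∧
  (∀ p ∈ TSq η, lap2 q3 p =
    lam ^ 2 / L * q3 p *
      (A - B * q3 p + 2 * C * ((q1 p) ^ 2 + (q2 p) ^ 2 + 3 * (q3 p) ^ 2))
      + lam ^ 2 * B / (3 * L) * ((q1 p) ^ 2 + (q2 p) ^ 2)) ∧
  BC1 A B C η q1 ∧
  (∀ p ∈ frontier (TSq η), q2 p = 0) ∧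
  (∀ p ∈ frontier (TSq η), q3 p = -(splus A B C) / 6)

section Helpers
open Filter Topology
lemma exists_open_contDiffOn {f : ℝ → ℝ} {a : ℝ} (hf : ContDiffAt ℝ 2 f a) :
    ∃ u : Set ℝ, IsOpen u ∧ a ∈ u ∧ ContDiffOn ℝ 2 f u := by
  obtain ⟨u, hu, hfu⟩ := hf.contDiffOn (le_refl 2) (by simp)
  obtain ⟨v, hvu, hv, hav⟩ := mem_nhds_iff.1 hu
  exact ⟨v, hv, hav, hfu.mono hvu⟩

lemma secondDeriv_nonpos_of_isLocalMax {f : ℝ → ℝ} {a : ℝ}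
    (hf : ContDiffAt ℝ 2 f a) (h : IsLocalMax f a) : deriv (deriv f) a ≤ 0 := by
  by_contra hcon
  push_neg at hcon
  obtain ⟨u, huo, hau, hfu⟩ := exists_open_contDiffOn hf
  have hdf : DifferentiableOn ℝ f u := hfu.differentiableOn (by norm_num)
  have hderiv : ContDiffOn ℝ 1 (deriv f) u := hfu.deriv_of_isOpen huo (by norm_num)
  have hgdiff : DifferentiableAt ℝ (deriv f) a :=
    ((hderiv.differentiableOn (by norm_num)).differentiableAt (huo.mem_nhds hau))
  have hga : deriv f a = 0 := h.deriv_eq_zero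
  have hslope : Tendsto (slope (deriv f) a) (𝓝[≠] a) (𝓝 (deriv (deriv f) a)) :=
    hasDerivAt_iff_tendsto_slope.1 hgdiff.hasDerivAt
  have hpos : ∀ᶠ x in 𝓝[≠] a, 0 < slope (deriv f) a x :=
    hslope.eventually (eventually_gt_nhds hcon)
  have hlt : ∀ᶠ x in 𝓝[<] a, deriv f x < 0 := by
    filter_upwards [nhdsWithin_mono a (fun x (hx : x ∈ Iio a) => ne_of_lt hx) hpos,
      eventually_mem_nhdsWithin] with x hx hx'
    rw [slope_def_field, hga, sub_zero] at hx
    rcases div_pos_iff.1 hx with ⟨h1, h2⟩ | ⟨h1, h2⟩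
    · exfalso; have := mem_Iio.1 hx'; linarith
    · exact h1
  have hmem : ∀ᶠ x in 𝓝[<] a, x ∈ u :=
    mem_nhdsWithin_of_mem_nhds (huo.mem_nhds hau)
  have hle : ∀ᶠ x in 𝓝[<] a, f x ≤ f a := mem_nhdsWithin_of_mem_nhds h
  obtain ⟨b, hba, hb⟩ := (nhdsLT_basis_of_exists_lt ⟨a - 1, by linarith⟩).eventually_iff.1
    ((hlt.and hmem).and hle)
  set c := (b + a) / 2 with hc
  have hcb : c ∈ Ioo b a := ⟨by simp [hc]; linarith, by simp [hc]; linarith⟩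
  have hsub : Icc c a ⊆ u := by
    intro x hx
    rcases eq_or_lt_of_le hx.2 with rfl | hxa
    · exact hau
    · exact ((hb ⟨lt_of_lt_of_le hcb.1 hx.1, hxa⟩).1).2
  have hanti : StrictAntiOn f (Icc c a) := by
    apply strictAntiOn_of_deriv_neg (convex_Icc c a) (hdf.continuousOn.mono hsub)
    intro x hx
    rw [interior_Icc] at hx
    exact ((hb ⟨lt_trans hcb.1 hx.1, hx.2⟩).1).1
  have hca : f a < f c := hanti (left_mem_Icc.2 (le_of_lt hcb.2)) (right_mem_Icc.2 (le_of_lt hcb.2)) hcb.2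
  have := (hb ⟨hcb.1, hcb.2⟩).2
  linarith

lemma secondDeriv_nonneg_of_isLocalMin {f : ℝ → ℝ} {a : ℝ}
    (hf : ContDiffAt ℝ 2 f a) (h : IsLocalMin f a) : 0 ≤ deriv (deriv f) a := by
  have h1 := secondDeriv_nonpos_of_isLocalMax hf.neg h.neg
  have h2 : (deriv fun x => -f x) = fun x => -deriv f x := funext fun x => deriv.neg
  rw [h2] at h1
  rw [show deriv (fun x => -deriv f x) a = -deriv (deriv f) a from deriv.neg] at h1
  linarith

lemma sliceX_contDiffAt {q : ℝ × ℝ → ℝ} {s : Set (ℝ × ℝ)} (hs : IsOpen s)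
    (hq : ContDiffOn ℝ 2 q s) {p : ℝ × ℝ} (hp : p ∈ s) :
    ContDiffAt ℝ 2 (fun x => q (x, p.2)) p.1 := by
  have h1 : ContDiffAt ℝ 2 q p := hq.contDiffAt (hs.mem_nhds hp)
  have h2 : ContDiffAt ℝ 2 (fun x : ℝ => (x, p.2)) p.1 :=
    (contDiff_id.prodMk contDiff_const).contDiffAt
  exact (ContDiffAt.comp p.1 (by rwa [Prod.mk.eta]) h2 : )

lemma sliceY_contDiffAt {q : ℝ × ℝ → ℝ} {s : Set (ℝ × ℝ)} (hs : IsOpen s)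
    (hq : ContDiffOn ℝ 2 q s) {p : ℝ × ℝ} (hp : p ∈ s) :
    ContDiffAt ℝ 2 (fun y => q (p.1, y)) p.2 := by
  have h1 : ContDiffAt ℝ 2 q p := hq.contDiffAt (hs.mem_nhds hp)
  have h2 : ContDiffAt ℝ 2 (fun y : ℝ => (p.1, y)) p.2 :=
    (contDiff_const.prodMk contDiff_id).contDiffAt
  exact (ContDiffAt.comp p.2 (by rwa [Prod.mk.eta]) h2 : )

lemma lap2_nonpos_of_isMaxOn {q : ℝ × ℝ → ℝ} {s : Set (ℝ × ℝ)} (hs : IsOpen s)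
    (hq : ContDiffOn ℝ 2 q s) {p : ℝ × ℝ} (hp : p ∈ s)
    (hmax : ∀ z ∈ s, q z ≤ q p) : lap2 q p ≤ 0 := by
  have hx : IsLocalMax (fun x => q (x, p.2)) p.1 := by
    have hc : ContinuousAt (fun x : ℝ => (x, p.2)) p.1 :=
      (continuous_id.prodMk continuous_const).continuousAt
    have hmem : ∀ᶠ x in 𝓝 p.1, (x, p.2) ∈ s := by
      have := hc.preimage_mem_nhds (by rw [Prod.mk.eta]; exact hs.mem_nhds hp)
      exact this
    filter_upwards [hmem] with x hxs
    simpa [Prod.mk.eta] using hmax _ hxs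
  have hy : IsLocalMax (fun y => q (p.1, y)) p.2 := by
    have hc : ContinuousAt (fun y : ℝ => (p.1, y)) p.2 :=
      (continuous_const.prodMk continuous_id).continuousAt
    have hmem : ∀ᶠ y in 𝓝 p.2, (p.1, y) ∈ s :=
      hc.preimage_mem_nhds (by rw [Prod.mk.eta]; exact hs.mem_nhds hp)
    filter_upwards [hmem] with y hys
    simpa [Prod.mk.eta] using hmax _ hys
  exact add_nonpos
    (secondDeriv_nonpos_of_isLocalMax (sliceX_contDiffAt hs hq hp) hx)
    (secondDeriv_nonpos_of_isLocalMax (sliceY_contDiffAt hs hq hp) hy)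

lemma lap2_nonneg_of_isMinOn {q : ℝ × ℝ → ℝ} {s : Set (ℝ × ℝ)} (hs : IsOpen s)
    (hq : ContDiffOn ℝ 2 q s) {p : ℝ × ℝ} (hp : p ∈ s)
    (hmin : ∀ z ∈ s, q p ≤ q z) : 0 ≤ lap2 q p := by
  have hx : IsLocalMin (fun x => q (x, p.2)) p.1 := by
    have hc : ContinuousAt (fun x : ℝ => (x, p.2)) p.1 :=
      (continuous_id.prodMk continuous_const).continuousAt
    have hmem : ∀ᶠ x in 𝓝 p.1, (x, p.2) ∈ s :=
      hc.preimage_mem_nhds (by rw [Prod.mk.eta]; exact hs.mem_nhds hp)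
    filter_upwards [hmem] with x hxs
    simpa [Prod.mk.eta] using hmin _ hxs
  have hy : IsLocalMin (fun y => q (p.1, y)) p.2 := by
    have hc : ContinuousAt (fun y : ℝ => (p.1, y)) p.2 :=
      (continuous_const.prodMk continuous_id).continuousAt
    have hmem : ∀ᶠ y in 𝓝 p.2, (p.1, y) ∈ s :=
      hc.preimage_mem_nhds (by rw [Prod.mk.eta]; exact hs.mem_nhds hp)
    filter_upwards [hmem] with y hys
    simpa [Prod.mk.eta] using hmin _ hys
  exact add_nonneg
    (secondDeriv_nonneg_of_isLocalMin (sliceX_contDiffAt hs hq hp) hx)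
    (secondDeriv_nonneg_of_isLocalMin (sliceY_contDiffAt hs hq hp) hy)

lemma secondDeriv_comb {f g h : ℝ → ℝ} {a : ℝ} (hf : ContDiffAt ℝ 2 f a)
    (hg : ContDiffAt ℝ 2 g a) (hh : ContDiffAt ℝ 2 h a) :
    deriv (deriv (fun x => f x ^ 2 + g x ^ 2 + 3 * h x ^ 2)) a
      = 2 * f a * deriv (deriv f) a + 2 * (deriv f a) ^ 2
      + 2 * g a * deriv (deriv g) a + 2 * (deriv g a) ^ 2
      + 6 * h a * deriv (deriv h) a + 6 * (deriv h a) ^ 2 := by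
  obtain ⟨uf, hufo, hauf, hfu⟩ := exists_open_contDiffOn hf
  obtain ⟨ug, hugo, haug, hgu⟩ := exists_open_contDiffOn hg
  obtain ⟨uh, huho, hauh, hhu⟩ := exists_open_contDiffOn hh
  set u := uf ∩ ug ∩ uh with hu
  have huo : IsOpen u := (hufo.inter hugo).inter huho
  have hau : a ∈ u := ⟨⟨hauf, haug⟩, hauh⟩
  have hfd : ∀ x ∈ u, HasDerivAt f (deriv f x) x := fun x hx =>
    ((hfu.differentiableOn (by norm_num)).differentiableAt
      (hufo.mem_nhds hx.1.1)).hasDerivAt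
  have hgd : ∀ x ∈ u, HasDerivAt g (deriv g x) x := fun x hx =>
    ((hgu.differentiableOn (by norm_num)).differentiableAt
      (hugo.mem_nhds hx.1.2)).hasDerivAt
  have hhd : ∀ x ∈ u, HasDerivAt h (deriv h x) x := fun x hx =>
    ((hhu.differentiableOn (by norm_num)).differentiableAt
      (huho.mem_nhds hx.2)).hasDerivAt
  have heq : EqOn (deriv (fun x => f x ^ 2 + g x ^ 2 + 3 * h x ^ 2))
      (fun x => 2 * f x * deriv f x + 2 * g x * deriv g x + 6 * h x * deriv h x) u := by
    intro x hx
    have H : HasDerivAt (fun x => f x ^ 2 + g x ^ 2 + 3 * h x ^ 2)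
        (2 * f x * deriv f x + 2 * g x * deriv g x + 6 * h x * deriv h x) x := by
      have := (((hfd x hx).pow 2).add ((hgd x hx).pow 2)).add (((hhd x hx).pow 2).const_mul 3)
      refine this.congr_deriv ?_
      push_cast
      ring
    exact H.deriv
  have hev : deriv (fun x => f x ^ 2 + g x ^ 2 + 3 * h x ^ 2)
      =ᶠ[𝓝 a] (fun x => 2 * f x * deriv f x + 2 * g x * deriv g x + 6 * h x * deriv h x) :=
    Filter.eventuallyEq_of_mem (huo.mem_nhds hau) heq
  rw [hev.deriv_eq]
  have hf1 : HasDerivAt f (deriv f a) a := hfd a hau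
  have hg1 : HasDerivAt g (deriv g a) a := hgd a hau
  have hh1 : HasDerivAt h (deriv h a) a := hhd a hau
  have hf2 : HasDerivAt (deriv f) (deriv (deriv f) a) a :=
    (((hfu.deriv_of_isOpen hufo (by norm_num) : ContDiffOn ℝ 1 (deriv f) _).differentiableOn (by norm_num)).differentiableAt
      (hufo.mem_nhds hauf)).hasDerivAt
  have hg2 : HasDerivAt (deriv g) (deriv (deriv g) a) a :=
    (((hgu.deriv_of_isOpen hugo (by norm_num) : ContDiffOn ℝ 1 (deriv g) _).differentiableOn (by norm_num)).differentiableAt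
      (hugo.mem_nhds haug)).hasDerivAt
  have hh2 : HasDerivAt (deriv h) (deriv (deriv h) a) a :=
    (((hhu.deriv_of_isOpen huho (by norm_num) : ContDiffOn ℝ 1 (deriv h) _).differentiableOn (by norm_num)).differentiableAt
      (huho.mem_nhds hauh)).hasDerivAt
  have H2 : HasDerivAt (fun x => 2 * f x * deriv f x + 2 * g x * deriv g x + 6 * h x * deriv h x)
      (2 * f a * deriv (deriv f) a + 2 * (deriv f a) ^ 2
      + 2 * g a * deriv (deriv g) a + 2 * (deriv g a) ^ 2
      + 6 * h a * deriv (deriv h) a + 6 * (deriv h a) ^ 2) a := by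
    have := (((hf1.const_mul 2).mul hf2).add ((hg1.const_mul 2).mul hg2)).add
      ((hh1.const_mul 6).mul hh2)
    refine this.congr_deriv ?_
    ring
  exact H2.deriv

end Helpers
section Geom
variable {η : ℝ}

lemma isOpen_TSq (η : ℝ) : IsOpen (TSq η) := by
  have : TSq η = ((fun p : ℝ × ℝ => |p.1|) ⁻¹' Iio (1 - η)) ∩
      (((fun p : ℝ × ℝ => |p.2|) ⁻¹' Iio (1 - η)) ∩
      (((fun p : ℝ × ℝ => |p.1 + p.2|) ⁻¹' Iio 1) ∩
      ((fun p : ℝ × ℝ => |p.1 - p.2|) ⁻¹' Iio 1))) := rfl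
  rw [this]
  exact (isOpen_Iio.preimage (by fun_prop)).inter
    ((isOpen_Iio.preimage (by fun_prop)).inter
      ((isOpen_Iio.preimage (by fun_prop)).inter (isOpen_Iio.preimage (by fun_prop))))

def KSq (η : ℝ) : Set (ℝ × ℝ) :=
  {p | |p.1| ≤ 1 - η ∧ |p.2| ≤ 1 - η ∧ |p.1 + p.2| ≤ 1 ∧ |p.1 - p.2| ≤ 1}

lemma isClosed_KSq (η : ℝ) : IsClosed (KSq η) := by
  have : KSq η = ((fun p : ℝ × ℝ => |p.1|) ⁻¹' Iic (1 - η)) ∩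
      (((fun p : ℝ × ℝ => |p.2|) ⁻¹' Iic (1 - η)) ∩
      (((fun p : ℝ × ℝ => |p.1 + p.2|) ⁻¹' Iic 1) ∩
      ((fun p : ℝ × ℝ => |p.1 - p.2|) ⁻¹' Iic 1))) := rfl
  rw [this]
  exact (isClosed_Iic.preimage (by fun_prop)).inter
    ((isClosed_Iic.preimage (by fun_prop)).inter
      ((isClosed_Iic.preimage (by fun_prop)).inter (isClosed_Iic.preimage (by fun_prop))))

lemma closure_TSq_subset (η : ℝ) : closure (TSq η) ⊆ KSq η :=
  closure_minimal (fun p hp => ⟨hp.1.le, hp.2.1.le, hp.2.2.1.le, hp.2.2.2.le⟩) (isClosed_KSq η)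

lemma isCompact_closure_TSq (hη : η ∈ Ioo (0:ℝ) 1) : IsCompact (closure (TSq η)) := by
  refine (isCompact_Icc (a := ((-1 : ℝ), (-1 : ℝ))) (b := ((1:ℝ), (1:ℝ)))).of_isClosed_subset
    isClosed_closure ?_
  refine closure_minimal (fun p hp => ?_) isClosed_Icc
  obtain ⟨h1, h2, -, -⟩ := hp
  rw [abs_lt] at h1 h2
  constructor
  · exact ⟨by simp; linarith [hη.1], by simp; linarith [hη.1]⟩
  · exact ⟨by simp; linarith [hη.1], by simp; linarith [hη.1]⟩

lemma frontier_TSq_subset (hη : η ∈ Ioo (0:ℝ) 1) :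
    frontier (TSq η) ⊆ edgeC1 η ∪ edgeC2 η ∪ edgeC3 η ∪ edgeC4 η ∪
      edgeS1 η ∪ edgeS2 η ∪ edgeS3 η ∪ edgeS4 η := by
  intro p hp
  have hK : p ∈ KSq η := closure_TSq_subset η hp.1
  have hnot : p ∉ TSq η := by
    have := (isOpen_TSq η).interior_eq
    intro hmem
    exact hp.2 (this.symm ▸ hmem)
  obtain ⟨h1, h2, h3, h4⟩ := hK
  rw [abs_le] at h1 h2 h3 h4
  simp only [TSq, mem_setOf_eq, not_and_or, not_lt] at hnot
  have hη0 := hη.1; have hη1 := hη.2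
  rcases hnot with h | h | h | h
  · -- |p.1| = 1 - η : S1 or S3
    rcases le_or_gt 0 p.1 with hs | hs
    · have he : p.1 = 1 - η := by
        rw [abs_of_nonneg hs] at h; linarith [h1.2]
      have hmem : p ∈ edgeS1 η := ⟨he, abs_le.2 ⟨by linarith [h3.1], by linarith [h4.2]⟩⟩
      simp only [mem_union]; tauto
    · have he : p.1 = -(1 - η) := by
        rw [abs_of_neg hs] at h; linarith [h1.1]
      have hmem : p ∈ edgeS3 η := ⟨he, abs_le.2 ⟨by linarith [h4.1], by linarith [h3.2]⟩⟩
      simp only [mem_union]; tauto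
  · -- |p.2| = 1 - η : S2 or S4
    rcases le_or_gt 0 p.2 with hs | hs
    · have he : p.2 = 1 - η := by
        rw [abs_of_nonneg hs] at h; linarith [h2.2]
      have hmem : p ∈ edgeS2 η := ⟨he, abs_le.2 ⟨by linarith [h3.1], by linarith [h4.1]⟩⟩
      simp only [mem_union]; tauto
    · have he : p.2 = -(1 - η) := by
        rw [abs_of_neg hs] at h; linarith [h2.1]
      have hmem : p ∈ edgeS4 η := ⟨he, abs_le.2 ⟨by linarith [h4.2], by linarith [h3.2]⟩⟩
      simp only [mem_union]; tauto
  · -- |p.1 + p.2| = 1 : C1 or C3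
    rcases le_or_gt 0 (p.1 + p.2) with hs | hs
    · have he : p.1 + p.2 = 1 := by
        rw [abs_of_nonneg hs] at h; linarith [h3.2]
      have hmem : p ∈ edgeC1 η := ⟨he, by linarith [h2.2], by linarith [h1.2]⟩
      simp only [mem_union]; tauto
    · have he : p.1 + p.2 = -1 := by
        rw [abs_of_neg hs] at h; linarith [h3.1]
      have hmem : p ∈ edgeC3 η := ⟨he, by linarith [h1.1], by linarith [h2.1]⟩
      simp only [mem_union]; tauto
  · -- |p.1 - p.2| = 1 : C4 or C2
    rcases le_or_gt 0 (p.1 - p.2) with hs | hs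
    · have he : p.1 - p.2 = 1 := by
        rw [abs_of_nonneg hs] at h; linarith [h4.2]
      have hmem : p ∈ edgeC4 η := ⟨he, by linarith [h2.1], by linarith [h1.2]⟩
      simp only [mem_union]; tauto
    · have he : p.2 - p.1 = 1 := by
        rw [abs_of_neg hs] at h; linarith [h4.1]
      have hmem : p ∈ edgeC2 η := ⟨he, by linarith [h1.1], by linarith [h2.2]⟩
      simp only [mem_union]; tauto

end Geom

section Alg
variable {A B C : ℝ}

lemma hAneg (hB : 0 < B) (hC : 0 < C) (hA : A < -(B ^ 2) / (3 * C)) : A < 0 := by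
  have hb2 : 0 < B ^ 2 := by positivity
  have h3 : -(B ^ 2) / (3 * C) < 0 := div_neg_of_neg_of_pos (by linarith) (by positivity)
  linarith

lemma hAC3 (hB : 0 < B) (hC : 0 < C) (hA : A < -(B ^ 2) / (3 * C)) :
    A * (3 * C) < -(B ^ 2) := (lt_div_iff₀ (by positivity)).1 hA

lemma sqrtD_sq (hB : 0 < B) (hC : 0 < C) (hA : A < -(B ^ 2) / (3 * C)) :
    (Real.sqrt (B ^ 2 + 24 * |A| * C)) ^ 2 = B ^ 2 - 24 * A * C := by
  have hneg := hAneg hB hC hA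
  have hnn : (0:ℝ) ≤ B ^ 2 + 24 * |A| * C := by positivity
  rw [Real.sq_sqrt hnn, abs_of_neg hneg]
  ring

lemma sqrtD_gt (hB : 0 < B) (hC : 0 < C) (hA : A < -(B ^ 2) / (3 * C)) :
    3 * B < Real.sqrt (B ^ 2 + 24 * |A| * C) := by
  have h2 := sqrtD_sq hB hC hA
  have h0 : 0 ≤ Real.sqrt (B ^ 2 + 24 * |A| * C) := Real.sqrt_nonneg _
  have hAC := hAC3 hB hC hA
  nlinarith

lemma splus_pos (hB : 0 < B) (hC : 0 < C) (hA : A < -(B ^ 2) / (3 * C)) :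
    0 < splus A B C := by
  have h0 : 0 ≤ Real.sqrt (B ^ 2 + 24 * |A| * C) := Real.sqrt_nonneg _
  unfold splus
  positivity

lemma keyp (hB : 0 < B) (hC : 0 < C) (hA : A < -(B ^ 2) / (3 * C)) :
    2 * C * (splus A B C) ^ 2 - B * splus A B C + 3 * A = 0 := by
  have h2 := sqrtD_sq hB hC hA
  unfold splus
  generalize Real.sqrt (B ^ 2 + 24 * |A| * C) = s at h2 ⊢
  field_simp
  nlinarith [h2]

lemma keym (hB : 0 < B) (hC : 0 < C) (hA : A < -(B ^ 2) / (3 * C)) :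
    2 * C * (sminus A B C) ^ 2 - B * sminus A B C + 3 * A = 0 := by
  have h2 := sqrtD_sq hB hC hA
  unfold sminus
  generalize Real.sqrt (B ^ 2 + 24 * |A| * C) = s at h2 ⊢
  field_simp
  nlinarith [h2]

lemma ssum (hC : 0 < C) : 2 * C * (splus A B C + sminus A B C) = B := by
  unfold splus sminus; field_simp; ring

lemma sprod (hB : 0 < B) (hC : 0 < C) (hA : A < -(B ^ 2) / (3 * C)) :
    2 * C * (splus A B C * sminus A B C) = 3 * A := by
  have h2 := sqrtD_sq hB hC hA
  unfold splus sminus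
  generalize Real.sqrt (B ^ 2 + 24 * |A| * C) = s at h2 ⊢
  field_simp
  nlinarith [h2]

lemma two_sm_sp (hB : 0 < B) (hC : 0 < C) (hA : A < -(B ^ 2) / (3 * C)) :
    2 * sminus A B C + splus A B C < 0 := by
  have h3 := sqrtD_gt hB hC hA
  unfold splus sminus
  rw [show 2 * ((B - Real.sqrt (B ^ 2 + 24 * |A| * C)) / (4 * C)) +
      (B + Real.sqrt (B ^ 2 + 24 * |A| * C)) / (4 * C) =
      (3 * B - Real.sqrt (B ^ 2 + 24 * |A| * C)) / (4 * C) by field_simp; ring]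
  exact div_neg_of_neg_of_pos (by linarith) (by positivity)

lemma sminus_neg (hB : 0 < B) (hC : 0 < C) (hA : A < -(B ^ 2) / (3 * C)) :
    sminus A B C < 0 := by
  have := two_sm_sp hB hC hA
  have := splus_pos hB hC hA
  linarith

lemma twoCsp_gt_B (hB : 0 < B) (hC : 0 < C) (hA : A < -(B ^ 2) / (3 * C)) :
    B < 2 * C * splus A B C := by
  have h3 := sqrtD_gt hB hC hA
  unfold splus
  rw [show 2 * C * ((B + Real.sqrt (B ^ 2 + 24 * |A| * C)) / (4 * C)) =
      (B + Real.sqrt (B ^ 2 + 24 * |A| * C)) / 2 by field_simp; ring]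
  rw [lt_div_iff₀ (by norm_num : (0:ℝ) < 2)]
  linarith

lemma Csp_gt (hB : 0 < B) (hC : 0 < C) (hA : A < -(B ^ 2) / (3 * C)) :
    B < C * splus A B C := by
  have h3 := sqrtD_gt hB hC hA
  unfold splus
  rw [show C * ((B + Real.sqrt (B ^ 2 + 24 * |A| * C)) / (4 * C)) =
      (B + Real.sqrt (B ^ 2 + 24 * |A| * C)) / 4 by field_simp]
  rw [lt_div_iff₀ (by norm_num : (0:ℝ) < 4)]
  linarith

lemma psi_pos (hB : 0 < B) (hC : 0 < C) (hA : A < -(B ^ 2) / (3 * C)) {m : ℝ}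
    (hm : m < sminus A B C / 3) : 0 < 6 * C * m ^ 2 - B * m + A := by
  have h1 := ssum (A := A) (B := B) hC
  have h2 := sprod hB hC hA
  have h3 := splus_pos hB hC hA
  have h4 := sminus_neg hB hC hA
  have hm2 : m < splus A B C / 3 := by linarith
  have hssum_m : 2 * C * splus A B C * m + 2 * C * sminus A B C * m = B * m :=
    by linear_combination m * h1
  nlinarith [mul_pos (by linarith : 0 < sminus A B C / 3 - m)
    (by linarith : 0 < splus A B C / 3 - m), hssum_m, h2, hC]

lemma psi_neg (hB : 0 < B) (hC : 0 < C) (hA : A < -(B ^ 2) / (3 * C)) {m : ℝ}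
    (h1m : sminus A B C / 3 < m) (h2m : m < splus A B C / 3) :
    6 * C * m ^ 2 - B * m + A < 0 := by
  have h1 := ssum (A := A) (B := B) hC
  have h2 := sprod hB hC hA
  have hssum_m : 2 * C * splus A B C * m + 2 * C * sminus A B C * m = B * m :=
    by linear_combination m * h1
  nlinarith [mul_pos (by linarith : 0 < m - sminus A B C / 3)
    (by linarith : 0 < splus A B C / 3 - m), hssum_m, h2, hC]

lemma coef_neg (hB : 0 < B) (hC : 0 < C) (hA : A < -(B ^ 2) / (3 * C)) {m : ℝ}
    (hm : m < sminus A B C / 3) : 2 * C * m + B / 3 < 0 := by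
  have h1 := ssum (A := A) (B := B) hC
  have h2 := Csp_gt hB hC hA
  nlinarith [mul_lt_mul_of_pos_left hm (by positivity : (0:ℝ) < 2 * C)]

lemma lower_core (hB : 0 < B) (hC : 0 < C) (hA : A < -(B ^ 2) / (3 * C)) {m r : ℝ}
    (hm : m < sminus A B C / 3) (hr : 0 ≤ r) :
    m * (6 * C * m ^ 2 - B * m + A) + r * (2 * C * m + B / 3) < 0 := by
  have h1 := psi_pos hB hC hA hm
  have h2 := coef_neg hB hC hA hm
  have h3 := sminus_neg hB hC hA
  have hm0 : m < 0 := by linarith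
  nlinarith [mul_neg_of_neg_of_pos hm0 h1, mul_nonpos_of_nonneg_of_nonpos hr h2.le]

lemma upper_core (hB : 0 < B) (hC : 0 < C) (hA : A < -(B ^ 2) / (3 * C)) {M r : ℝ}
    (hM1 : -(splus A B C) / 6 < M) (hM2 : M < 0) (hr0 : 0 ≤ r)
    (hrb : r ≤ (splus A B C) ^ 2 / 3 - 3 * M ^ 2) :
    0 < M * (6 * C * M ^ 2 - B * M + A) + r * (2 * C * M + B / 3) := by
  have hsp := splus_pos hB hC hA
  have h2sm := two_sm_sp hB hC hA
  have hψ : 6 * C * M ^ 2 - B * M + A < 0 :=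
    psi_neg hB hC hA (by linarith) (by linarith)
  have hMψ : 0 < M * (6 * C * M ^ 2 - B * M + A) := mul_pos_of_neg_of_neg hM2 hψ
  rcases le_or_gt 0 (2 * C * M + B / 3) with hcoef | hcoef
  · nlinarith [mul_nonneg hr0 hcoef]
  · have hrprod : ((splus A B C) ^ 2 / 3 - 3 * M ^ 2) * (2 * C * M + B / 3)
        ≤ r * (2 * C * M + B / 3) := mul_le_mul_of_nonpos_right hrb hcoef.le
    have hkeyM : 2 * C * (splus A B C) ^ 2 * M = (B * splus A B C - 3 * A) * M := by
      linear_combination M * keyp hB hC hA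
    nlinarith [hMψ, hrprod, hkeyM,
      mul_pos (by linarith : 0 < M + splus A B C / 6)
        (by nlinarith : 0 < splus A B C / 3 - M)]

lemma sig_core (hB : 0 < B) (hC : 0 < C) (hA : A < -(B ^ 2) / (3 * C)) {m r sv : ℝ}
    (hm : m < 0) (hr : 0 ≤ r) (hsv : sv = r + 3 * m ^ 2)
    (hgt : (splus A B C) ^ 2 / 3 < sv) :
    0 < A * sv + 2 * C * sv ^ 2 + 3 * B * m * (r - m ^ 2) := by
  have hsp := splus_pos hB hC hA
  have hCsp := Csp_gt hB hC hA
  have hkeyp := keyp hB hC hA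
  set c : ℝ := -m with hcdef
  have hc0 : 0 < c := by simp only [hcdef]; linarith
  have hsvpos : 0 < sv := by nlinarith [sq_nonneg (splus A B C)]
  set y : ℝ := Real.sqrt (3 * sv) with hydef
  have hy0 : 0 ≤ y := Real.sqrt_nonneg _
  have hy2 : y ^ 2 = 3 * sv := Real.sq_sqrt (by linarith)
  have hy3 : y ^ 3 = 3 * sv * y := by rw [pow_succ, hy2]
  have hcy2 : c * y ^ 2 = 3 * c * sv := by rw [hy2]; ring
  have hcs : c * sv = c * r + 3 * c ^ 3 := by rw [hsv, hcdef]; ring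
  have h1 : 9 * c * r - 9 * c ^ 3 ≤ sv * y := by
    nlinarith [mul_nonneg (sq_nonneg (y - 6 * c)) (by linarith : (0:ℝ) ≤ y + 3 * c),
      hy3, hcy2, hcs]
  have h2 : splus A B C < y := by nlinarith
  have h3 : 0 < 2 * C * y ^ 2 - B * y + 3 * A := by
    have hy_sp : 0 < 2 * C * (y + splus A B C) - B := by
      nlinarith [mul_pos hC (sub_pos.2 h2), hCsp]
    nlinarith [mul_pos (sub_pos.2 h2) hy_sp]
  have hsy2 : sv * y ^ 2 = 3 * sv ^ 2 := by rw [hy2]; ring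
  have hmc : m = -c := by rw [hcdef]; ring
  rw [hmc]
  nlinarith [mul_pos hsvpos h3, hsy2, mul_le_mul_of_nonneg_left h1 hB.le]
end Alg

lemma gradSq2_nonneg (q : ℝ × ℝ → ℝ) (p : ℝ × ℝ) : 0 ≤ gradSq2 q p :=
  add_nonneg (sq_nonneg _) (sq_nonneg _)

lemma lap2_comb {q1 q2 q3 : ℝ × ℝ → ℝ} {s : Set (ℝ × ℝ)} (hs : IsOpen s)
    (h1 : ContDiffOn ℝ 2 q1 s) (h2 : ContDiffOn ℝ 2 q2 s) (h3 : ContDiffOn ℝ 2 q3 s)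
    {p : ℝ × ℝ} (hp : p ∈ s) :
    lap2 (fun z => q1 z ^ 2 + q2 z ^ 2 + 3 * q3 z ^ 2) p
      = 2 * q1 p * lap2 q1 p + 2 * q2 p * lap2 q2 p + 6 * q3 p * lap2 q3 p
        + (2 * gradSq2 q1 p + 2 * gradSq2 q2 p + 6 * gradSq2 q3 p) := by
  have ex := secondDeriv_comb (sliceX_contDiffAt hs h1 hp) (sliceX_contDiffAt hs h2 hp)
    (sliceX_contDiffAt hs h3 hp)
  have ey := secondDeriv_comb (sliceY_contDiffAt hs h1 hp) (sliceY_contDiffAt hs h2 hp)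
    (sliceY_contDiffAt hs h3 hp)
  simp only [lap2, gradSq2]
  rw [ex, ey]
  ring

def sigf (q1 q2 q3 : ℝ × ℝ → ℝ) : ℝ × ℝ → ℝ := fun z => q1 z ^ 2 + q2 z ^ 2 + 3 * q3 z ^ 2
set_option maxHeartbeats 1000000 in
/-- Proposition prop:bounds-lowA: for `A < −B²/(3C)` and a solution of
(EL123)–(BC123) with `q₃ < 0` in `Ω`, one has `s₋/3 ≤ q₃ ≤ −s₊/6` in `Ω`. -/
theorem statement_8 (A B C L lam η : ℝ) (hB : 0 < B) (hC : 0 < C)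
    (hA : A < -(B ^ 2) / (3 * C))
    (hL : 0 < L) (hlam : 0 < lam) (hη : η ∈ Ioo (0 : ℝ) 1)
    (q1 q2 q3 : ℝ × ℝ → ℝ) (hsol : IsSolEL123 A B C L lam η q1 q2 q3)
    (hq3 : ∀ p ∈ TSq η, q3 p < 0) :
    ∀ p ∈ TSq η, sminus A B C / 3 ≤ q3 p ∧ q3 p ≤ -(splus A B C) / 6 := by
  obtain ⟨hcd1, hcd2, hcd3, hc1, hc2, hc3, hpde1, hpde2, hpde3, hbc1, hbc2, hbc3⟩ := hsol
  have hopen := isOpen_TSq η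
  have hcomp := isCompact_closure_TSq hη
  have hη0 := hη.1
  have hη1 := hη.2
  have hne : (closure (TSq η)).Nonempty := by
    refine ⟨(0, 0), subset_closure ?_⟩
    refine ⟨?_, ?_, ?_, ?_⟩ <;> simp <;> linarith
  have hsplit : ∀ p ∈ closure (TSq η), p ∈ TSq η ∨ p ∈ frontier (TSq η) := by
    intro p hp
    by_cases hmem : p ∈ TSq η
    · exact Or.inl hmem
    · exact Or.inr ⟨hp, by rwa [hopen.interior_eq]⟩
  have hk : 0 < lam ^ 2 / L := by positivity
  have hsp := splus_pos hB hC hA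
  have h2smsp := two_sm_sp hB hC hA
  -- boundary bound for q1 squared
  have hbq1 : ∀ p ∈ frontier (TSq η), (q1 p) ^ 2 ≤ (splus A B C) ^ 2 / 4 := by
    intro p hp
    rcases frontier_TSq_subset hη hp with
      (((((((h | h) | h) | h) | h) | h) | h) | h)
    · rw [hbc1.1 p (Or.inl h)]; nlinarith [sq_nonneg (splus A B C)]
    · rw [hbc1.2.1 p (Or.inl h)]; nlinarith [sq_nonneg (splus A B C)]
    · rw [hbc1.1 p (Or.inr h)]; nlinarith [sq_nonneg (splus A B C)]
    · rw [hbc1.2.1 p (Or.inr h)]; nlinarith [sq_nonneg (splus A B C)]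
    · rw [hbc1.2.2.1 p (Or.inl h), g0]
      rcases abs_le.1 h.2 with ⟨ha, hb⟩
      rw [div_pow, div_le_div_iff₀ (by positivity) (by norm_num)]
      nlinarith [mul_le_mul_of_nonneg_left (sq_le_sq' (by linarith) hb : p.2 ^ 2 ≤ η ^ 2)
        (sq_nonneg (splus A B C))]
    · rw [hbc1.2.2.2 p (Or.inl h), g0]
      rcases abs_le.1 h.2 with ⟨ha, hb⟩
      rw [div_pow, div_le_div_iff₀ (by positivity) (by norm_num)]
      nlinarith [mul_le_mul_of_nonneg_left (sq_le_sq' (by linarith) hb : p.1 ^ 2 ≤ η ^ 2)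
        (sq_nonneg (splus A B C))]
    · rw [hbc1.2.2.1 p (Or.inr h), g0]
      rcases abs_le.1 h.2 with ⟨ha, hb⟩
      rw [div_pow, div_le_div_iff₀ (by positivity) (by norm_num)]
      nlinarith [mul_le_mul_of_nonneg_left (sq_le_sq' (by linarith) hb : p.2 ^ 2 ≤ η ^ 2)
        (sq_nonneg (splus A B C))]
    · rw [hbc1.2.2.2 p (Or.inr h), g0]
      rcases abs_le.1 h.2 with ⟨ha, hb⟩
      rw [div_pow, div_le_div_iff₀ (by positivity) (by norm_num)]
      nlinarith [mul_le_mul_of_nonneg_left (sq_le_sq' (by linarith) hb : p.1 ^ 2 ≤ η ^ 2)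
        (sq_nonneg (splus A B C))]
  -- bound on sigma
  have hsigc : ContinuousOn (sigf q1 q2 q3) (closure (TSq η)) :=
    ((hc1.pow 2).add (hc2.pow 2)).add (continuousOn_const.mul (hc3.pow 2))
  have hsigcd : ContDiffOn ℝ 2 (sigf q1 q2 q3) (TSq η) :=
    ((hcd1.pow 2).add (hcd2.pow 2)).add (contDiffOn_const.mul (hcd3.pow 2))
  have hsig_bound : ∀ p ∈ closure (TSq η), sigf q1 q2 q3 p ≤ (splus A B C) ^ 2 / 3 := by
    obtain ⟨p0, hp0, hmax⟩ := hcomp.exists_isMaxOn hne hsigc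
    have hs0 : sigf q1 q2 q3 p0 ≤ (splus A B C) ^ 2 / 3 := by
      rcases hsplit p0 hp0 with hmem | hfr
      · by_contra hgt
        push_neg at hgt
        have hlap : lap2 (sigf q1 q2 q3) p0 ≤ 0 :=
          lap2_nonpos_of_isMaxOn hopen hsigcd hmem
            (fun z hz => hmax (subset_closure hz))
        have hexp : lap2 (sigf q1 q2 q3) p0
            = 2 * q1 p0 * lap2 q1 p0 + 2 * q2 p0 * lap2 q2 p0 + 6 * q3 p0 * lap2 q3 p0
              + (2 * gradSq2 q1 p0 + 2 * gradSq2 q2 p0 + 6 * gradSq2 q3 p0) :=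
          lap2_comb hopen hcd1 hcd2 hcd3 hmem
        have hcore : 0 < A * (sigf q1 q2 q3 p0) + 2 * C * (sigf q1 q2 q3 p0) ^ 2
            + 3 * B * q3 p0 * ((q1 p0 ^ 2 + q2 p0 ^ 2) - (q3 p0) ^ 2) :=
          sig_core hB hC hA (hq3 p0 hmem) (by positivity)
            (by simp only [sigf]) hgt
        have hsum3 : 2 * q1 p0 * lap2 q1 p0 + 2 * q2 p0 * lap2 q2 p0
            + 6 * q3 p0 * lap2 q3 p0
            = 2 * (lam ^ 2 / L) * (A * (sigf q1 q2 q3 p0)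
              + 2 * C * (sigf q1 q2 q3 p0) ^ 2
              + 3 * B * q3 p0 * ((q1 p0 ^ 2 + q2 p0 ^ 2) - (q3 p0) ^ 2)) := by
          rw [hpde1 p0 hmem, hpde2 p0 hmem, hpde3 p0 hmem]
          simp only [sigf]
          field_simp
          ring
        have hg1 := gradSq2_nonneg q1 p0
        have hg2 := gradSq2_nonneg q2 p0
        have hg3 := gradSq2_nonneg q3 p0
        have hpos : 0 < lap2 (sigf q1 q2 q3) p0 := by
          rw [hexp, hsum3]
          nlinarith [mul_pos hk hcore]
        linarith
      · have e2 := hbc2 p0 hfr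
        have e3 := hbc3 p0 hfr
        have hb1 := hbq1 p0 hfr
        simp only [sigf]
        rw [e2, e3]
        nlinarith [hsp]
    intro p hp
    exact le_trans (hmax hp) hs0
  -- lower bound
  have hlow : ∀ p ∈ closure (TSq η), sminus A B C / 3 ≤ q3 p := by
    obtain ⟨p1, hp1, hmin⟩ := hcomp.exists_isMinOn hne hc3
    have hm1 : sminus A B C / 3 ≤ q3 p1 := by
      rcases hsplit p1 hp1 with hmem | hfr
      · by_contra hgt
        push_neg at hgt
        have hlap : 0 ≤ lap2 q3 p1 :=
          lap2_nonneg_of_isMinOn hopen hcd3 hmem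
            (fun z hz => hmin (subset_closure hz))
        have hinner := lower_core hB hC hA hgt
          (by positivity : (0:ℝ) ≤ q1 p1 ^ 2 + q2 p1 ^ 2)
        have hneg : lap2 q3 p1 < 0 := by
          rw [hpde3 p1 hmem]
          have hid : lam ^ 2 / L * q3 p1 * (A - B * q3 p1
              + 2 * C * (q1 p1 ^ 2 + q2 p1 ^ 2 + 3 * q3 p1 ^ 2))
              + lam ^ 2 * B / (3 * L) * (q1 p1 ^ 2 + q2 p1 ^ 2)
              = lam ^ 2 / L * (q3 p1 * (6 * C * (q3 p1) ^ 2 - B * q3 p1 + A)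
                + (q1 p1 ^ 2 + q2 p1 ^ 2) * (2 * C * q3 p1 + B / 3)) := by
            field_simp
            ring
          rw [hid]
          exact mul_neg_of_pos_of_neg hk hinner
        linarith
      · rw [hbc3 p1 hfr]
        linarith
    intro p hp
    exact le_trans hm1 (hmin hp)
  -- upper bound
  have hupp : ∀ p ∈ TSq η, q3 p ≤ -(splus A B C) / 6 := by
    obtain ⟨p2, hp2, hmax⟩ := hcomp.exists_isMaxOn hne hc3
    have hm2 : q3 p2 ≤ -(splus A B C) / 6 := by
      rcases hsplit p2 hp2 with hmem | hfr
      · by_contra hgt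
        push_neg at hgt
        have hlap : lap2 q3 p2 ≤ 0 :=
          lap2_nonpos_of_isMaxOn hopen hcd3 hmem
            (fun z hz => hmax (subset_closure hz))
        have hrb : q1 p2 ^ 2 + q2 p2 ^ 2 ≤ (splus A B C) ^ 2 / 3 - 3 * (q3 p2) ^ 2 := by
          have := hsig_bound p2 (subset_closure hmem)
          simp only [sigf] at this
          linarith
        have hinner := upper_core hB hC hA hgt (hq3 p2 hmem)
          (by positivity : (0:ℝ) ≤ q1 p2 ^ 2 + q2 p2 ^ 2) hrb
        have hpos : 0 < lap2 q3 p2 := by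
          rw [hpde3 p2 hmem]
          have hid : lam ^ 2 / L * q3 p2 * (A - B * q3 p2
              + 2 * C * (q1 p2 ^ 2 + q2 p2 ^ 2 + 3 * q3 p2 ^ 2))
              + lam ^ 2 * B / (3 * L) * (q1 p2 ^ 2 + q2 p2 ^ 2)
              = lam ^ 2 / L * (q3 p2 * (6 * C * (q3 p2) ^ 2 - B * q3 p2 + A)
                + (q1 p2 ^ 2 + q2 p2 ^ 2) * (2 * C * q3 p2 + B / 3)) := by
            field_simp
            ring
          rw [hid]
          exact mul_pos hk hinner
        linarith
      · rw [hbc3 p2 hfr]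
    intro p hp
    exact le_trans (hmax (subset_closure hp)) hm2
  intro p hp
  exact ⟨hlow p (subset_closure hp), hupp p hp⟩
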